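/- If A is an associative algebra containing C(ℝ) (the continuous functions on ℝ) as a subalgebra with the constant function 1 as unit, and D : A → A is a linear map extending the usual derivative on continuously differentiable functions and satisfying the Leibniz rule D(ab) = D(a)b + aD(b), then D²(|x|) = 0 in A. -/

import Mathlib

open Filter

lemma hasDerivAt_mul_abs (x : ℝ) :
    HasDerivAt (fun y : ℝ => y * |y|) (|x| + |x|) x := by
  rcases lt_trichotomy x 0 with hx | rfl | hx
  · have h : HasDerivAt (fun y : ℝ => -(y * y)) (-(x + x)) x := by
      simpa using ((hasDerivAt_id' x).fun_mul (hasDerivAt_id' x)).fun_neg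
    have heq : (fun y : ℝ => y * |y|) =ᶠ[nhds x] fun y : ℝ => -(y * y) := by
      filter_upwards [Iio_mem_nhds hx] with y (hy : y < 0)
      rw [abs_of_neg hy]; ring
    have := h.congr_of_eventuallyEq heq
    rwa [abs_of_neg hx, neg_add] at *
  · rw [hasDerivAt_iff_tendsto_slope]
    have heq : (fun y : ℝ => |y|) =ᶠ[nhdsWithin (0:ℝ) {(0:ℝ)}ᶜ] slope (fun y : ℝ => y * |y|) 0 := by
      filter_upwards [self_mem_nhdsWithin] with y hy
      have hy' : y ≠ 0 := hy
      rw [slope_def_field]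
      field_simp
      simp
    have h0 : Tendsto (fun y : ℝ => |y|) (nhdsWithin (0:ℝ) {(0:ℝ)}ᶜ) (nhds (|(0:ℝ)| + |(0:ℝ)|)) := by
      simpa using (continuous_abs.tendsto (0:ℝ)).mono_left nhdsWithin_le_nhds
    exact h0.congr' heq
  · have h : HasDerivAt (fun y : ℝ => y * y) (x + x) x := by
      simpa using (hasDerivAt_id' x).fun_mul (hasDerivAt_id' x)
    have heq : (fun y : ℝ => y * |y|) =ᶠ[nhds x] fun y : ℝ => y * y := by
      filter_upwards [Ioi_mem_nhds hx] with y (hy : 0 < y)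
      rw [abs_of_pos hy]
    have := h.congr_of_eventuallyEq heq
    rwa [abs_of_pos hx]

lemma contDiff_mul_abs : ContDiff ℝ 1 (fun y : ℝ => y * |y|) := by
  rw [contDiff_one_iff_deriv]
  have hd : deriv (fun y : ℝ => y * |y|) = fun x => |x| + |x| :=
    funext fun x => (hasDerivAt_mul_abs x).deriv
  exact ⟨fun x => (hasDerivAt_mul_abs x).differentiableAt, by rw [hd]; continuity⟩

lemma hasDerivAt_sq_mul_log (x : ℝ) :
    HasDerivAt (fun y : ℝ => y ^ 2 * Real.log y)
      (x * Real.log x + x * Real.log x + x) x := by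
  rcases eq_or_ne x 0 with rfl | hx
  · rw [hasDerivAt_iff_tendsto_slope]
    have heq : (fun y : ℝ => y * Real.log y) =ᶠ[nhdsWithin (0:ℝ) {(0:ℝ)}ᶜ]
        slope (fun y : ℝ => y ^ 2 * Real.log y) 0 := by
      filter_upwards [self_mem_nhdsWithin] with y hy
      have hy' : (y : ℝ) ≠ 0 := hy
      rw [slope_def_field]
      field_simp
      ring
    have h0 : Tendsto (fun y : ℝ => y * Real.log y) (nhdsWithin (0:ℝ) {(0:ℝ)}ᶜ)
        (nhds ((0:ℝ) * Real.log 0 + 0 * Real.log 0 + 0)) := by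
      simpa using (Real.continuous_mul_log.tendsto (0:ℝ)).mono_left nhdsWithin_le_nhds
    exact h0.congr' heq
  · have h := (hasDerivAt_pow 2 x).fun_mul (Real.hasDerivAt_log hx)
    refine h.congr_deriv ?_
    have h2 : x ^ 2 * x⁻¹ = x := by
      rw [sq]; field_simp
    rw [h2]
    push_cast
    ring

lemma contDiff_sq_mul_log : ContDiff ℝ 1 (fun y : ℝ => y ^ 2 * Real.log y) := by
  rw [contDiff_one_iff_deriv]
  have hd : deriv (fun y : ℝ => y ^ 2 * Real.log y)
      = fun x => x * Real.log x + x * Real.log x + x :=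
    funext fun x => (hasDerivAt_sq_mul_log x).deriv
  refine ⟨fun x => (hasDerivAt_sq_mul_log x).differentiableAt, ?_⟩
  rw [hd]
  exact (Real.continuous_mul_log.add Real.continuous_mul_log).add continuous_id


/-- Schwartz impossibility result: if `A` is an associative algebra containing `C(ℝ)` as a
subalgebra (via an injective algebra homomorphism `j`) with the constant function `1` as unit,
and `D : A → A` is a linear map satisfying the Leibniz rule and extending the derivative of
continuously differentiable functions, then `D²(|x|) = 0`. -/
theorem schwartz_impossibility
    (A : Type*) [Ring A] [Algebra ℝ A]
    (j : C(ℝ, ℝ) →ₐ[ℝ] A) (hj : Function.Injective j)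
    (D : A →ₗ[ℝ] A)
    (hLeib : ∀ a b : A, D (a * b) = D a * b + a * D b)
    (hext : ∀ (f : ℝ → ℝ) (hf : ContDiff ℝ 1 f),
      D (j ⟨f, hf.continuous⟩) = j ⟨deriv f, hf.continuous_deriv le_rfl⟩) :
    D (D (j ⟨fun x => |x|, continuous_abs⟩)) = 0 := by
  set t : A := j ⟨fun x => x, continuous_id⟩ with ht
  set s : A := j ⟨fun x => |x|, continuous_abs⟩ with hs
  set l : A := j ⟨fun x => x * Real.log x, Real.continuous_mul_log⟩ with hl
  -- D t = 1
  have hDt : D t = 1 := by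
    have h := hext (fun x => x) contDiff_id
    have h1 : (⟨deriv fun x : ℝ => x, (contDiff_id (𝕜 := ℝ) (E := ℝ)).continuous_deriv le_rfl⟩ : C(ℝ, ℝ)) = 1 := by
      ext x
      simp
    rw [h1, map_one] at h
    exact h
  -- t * s = j (x * |x|)
  have hts : t * s = j ⟨fun x => x * |x|, contDiff_mul_abs.continuous⟩ := by
    rw [ht, hs, ← map_mul]
    congr 1
  -- D (t * s) = s + s
  have hDts : D (t * s) = s + s := by
    rw [hts, hext _ contDiff_mul_abs]
    have h1 : (⟨deriv fun y : ℝ => y * |y|, contDiff_mul_abs.continuous_deriv le_rfl⟩ : C(ℝ, ℝ))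
        = (⟨fun x => |x|, continuous_abs⟩ + ⟨fun x => |x|, continuous_abs⟩ : C(ℝ, ℝ)) := by
      ext x
      exact (hasDerivAt_mul_abs x).deriv
    rw [h1, map_add, ← hs]
  -- t * D s = s
  have h2 : t * D s = s := by
    have h := hLeib t s
    rw [hDts, hDt, one_mul] at h
    exact add_left_cancel h.symm
  -- t * D (D s) = 0
  have h3 : t * D (D s) = 0 := by
    have h := congrArg D h2
    rw [hLeib, hDt, one_mul] at h
    have h' : D s + t * D (D s) = D s + 0 := by rw [add_zero]; exact h
    exact add_left_cancel h'
  -- t * l = j (x^2 log x) = l * t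
  have htl : t * l = j ⟨fun x => x ^ 2 * Real.log x, contDiff_sq_mul_log.continuous⟩ := by
    rw [ht, hl, ← map_mul]
    congr 1
    ext x
    show x * (x * Real.log x) = x ^ 2 * Real.log x
    ring
  have hlt : l * t = j ⟨fun x => x ^ 2 * Real.log x, contDiff_sq_mul_log.continuous⟩ := by
    rw [ht, hl, ← map_mul]
    congr 1
    ext x
    show (x * Real.log x) * x = x ^ 2 * Real.log x
    ring
  -- D (j (x^2 log x)) = l + l + t
  have hDsq : D (j ⟨fun x => x ^ 2 * Real.log x, contDiff_sq_mul_log.continuous⟩) = l + l + t := by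
    rw [hext _ contDiff_sq_mul_log]
    have h1 : (⟨deriv fun y : ℝ => y ^ 2 * Real.log y,
        contDiff_sq_mul_log.continuous_deriv le_rfl⟩ : C(ℝ, ℝ))
        = ((⟨fun x => x * Real.log x, Real.continuous_mul_log⟩
            + ⟨fun x => x * Real.log x, Real.continuous_mul_log⟩
            + ⟨fun x => x, continuous_id⟩ : C(ℝ, ℝ))) := by
      ext x
      exact (hasDerivAt_sq_mul_log x).deriv
    rw [h1, map_add, map_add, ← hl, ← ht]
  -- D l * t = l + t
  have h7 : D l * t = l + t := by
    have h := hLeib l t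
    rw [hlt, hDsq, hDt, mul_one] at h
    have h' : (l + t) + l = D l * t + l := by rw [← h]; abel
    exact (add_right_cancel h').symm
  -- D (D l) * t = 1
  have h9 : D (D l) * t = 1 := by
    have h := congrArg D h7
    rw [hLeib, hDt, mul_one, map_add, hDt, add_comm (D l) 1] at h
    exact add_right_cancel h
  -- finish
  calc D (D s) = 1 * D (D s) := (one_mul _).symm
    _ = D (D l) * t * D (D s) := by rw [h9]
    _ = D (D l) * (t * D (D s)) := by rw [mul_assoc]
    _ = 0 := by rw [h3, mul_zero]
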